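/- Let B and Y be Banach spaces that are subspaces of a common vector space, and let X ⊂ B be a compactly gauged cone in B. Assume there is no sequence in B ∩ Y converging in Y to 0 and in B to some nonzero vector. Then for each η > 0 there exists c > 0 such that ‖u − v‖_B ≤ η([u]_X + [v]_X) + c·|u − v|_Y for all u, v ∈ X. -/
import Mathlib


/-- Cone version of Ehrling's lemma (Chen–Jüngel–Liu, Lemma 4): `B` and `Y` are Banach
spaces realized as subspaces of a common vector space `V` via injective linear maps,
`X ⊂ B` is a compactly gauged cone, and no sequence in `B ∩ Y` converges to `0` in `Y`
and to a nonzero vector in `B`. -/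
theorem cone_ehrling
    {B Y V : Type*} [NormedAddCommGroup B] [NormedSpace ℝ B] [CompleteSpace B]
    [NormedAddCommGroup Y] [NormedSpace ℝ Y] [CompleteSpace Y]
    [AddCommGroup V] [Module ℝ V]
    (iB : B →ₗ[ℝ] V) (iY : Y →ₗ[ℝ] V)
    (hiB : Function.Injective iB) (hiY : Function.Injective iY)
    (hseq : ∀ (u : ℕ → B) (w : ℕ → Y) (b : B),
      (∀ n, iB (u n) = iY (w n)) →
      Filter.Tendsto w Filter.atTop (nhds 0) →
      Filter.Tendsto u Filter.atTop (nhds b) → b = 0)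
    (X : Set B)
    (hcone : ∀ a : ℝ, 0 ≤ a → ∀ x ∈ X, a • x ∈ X)
    (g : B → ℝ)
    (hg0 : ∀ x ∈ X, 0 ≤ g x)
    (hgh : ∀ a : ℝ, 0 ≤ a → ∀ x ∈ X, g (a • x) = a * g x)
    (hgz : ∀ x ∈ X, (g x = 0 ↔ x = 0))
    (hcpt : TotallyBounded {x ∈ X | g x ≤ 1}) :
    ∀ η > 0, ∃ c > 0, ∀ u ∈ X, ∀ v ∈ X, ∀ yu yv : Y,
      iY yu = iB u → iY yv = iB v →
      ‖u - v‖ ≤ η * (g u + g v) + c * ‖yu - yv‖ := by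
  intro η hη
  by_contra hcon
  push_neg at hcon
  choose u hu v hv yu yv hyu hyv hlt using fun n : ℕ => hcon ((n : ℝ) + 1) (by positivity)
  set d : ℕ → ℝ := fun n => g (u n) + g (v n) with hd
  have hd0 : ∀ n, 0 < d n := by
    intro n
    rcases (add_nonneg (hg0 _ (hu n)) (hg0 _ (hv n))).lt_or_eq with h | h
    · exact h
    · exfalso
      have hgu : g (u n) = 0 := by
        have := hg0 _ (hu n); have := hg0 _ (hv n); linarith [h.symm]
      have hgv : g (v n) = 0 := by
        have := hg0 _ (hu n); have := hg0 _ (hv n); linarith [h.symm]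
      have hu0 : u n = 0 := (hgz _ (hu n)).1 hgu
      have hv0 : v n = 0 := (hgz _ (hv n)).1 hgv
      have hlt' := hlt n
      rw [hgu, hgv, hu0, hv0, sub_zero, norm_zero] at hlt'
      nlinarith [norm_nonneg (yu n - yv n), hη]
  set ub : ℕ → B := fun n => (d n)⁻¹ • u n with hub
  set vb : ℕ → B := fun n => (d n)⁻¹ • v n with hvb
  set w : ℕ → Y := fun n => (d n)⁻¹ • (yu n - yv n) with hw
  have hinv0 : ∀ n, (0:ℝ) ≤ (d n)⁻¹ := fun n => (inv_nonneg).2 (hd0 n).le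
  have hcancel : ∀ n, (d n)⁻¹ * d n = 1 := fun n => inv_mul_cancel₀ (hd0 n).ne'
  have hubS : ∀ n, ub n ∈ {x ∈ X | g x ≤ 1} := by
    intro n
    refine ⟨hcone _ (hinv0 n) _ (hu n), ?_⟩
    rw [hgh _ (hinv0 n) _ (hu n)]
    nlinarith [hcancel n, hg0 _ (hv n), hinv0 n]
  have hvbS : ∀ n, vb n ∈ {x ∈ X | g x ≤ 1} := by
    intro n
    refine ⟨hcone _ (hinv0 n) _ (hv n), ?_⟩
    rw [hgh _ (hinv0 n) _ (hv n)]
    nlinarith [hcancel n, hg0 _ (hu n), hinv0 n]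
  have hkey : ∀ n : ℕ, η + ((n : ℝ) + 1) * ‖w n‖ < ‖ub n - vb n‖ := by
    intro n
    have h1 : ‖ub n - vb n‖ = (d n)⁻¹ * ‖u n - v n‖ := by
      rw [hub, hvb]
      rw [← smul_sub, norm_smul, Real.norm_of_nonneg (hinv0 n)]
    have h2 : ‖w n‖ = (d n)⁻¹ * ‖yu n - yv n‖ := by
      rw [hw]
      rw [norm_smul, Real.norm_of_nonneg (hinv0 n)]
    rw [h1, h2]
    have := mul_lt_mul_of_pos_left (hlt n) (inv_pos.2 (hd0 n))
    nlinarith [hcancel n]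
  obtain ⟨M, hM⟩ := (isBounded_iff_forall_norm_le).1 hcpt.isBounded
  have hwle : ∀ n, ‖w n‖ ≤ (2 * M) / ((n : ℝ) + 1) := by
    intro n
    have hn1 : (0:ℝ) < (n : ℝ) + 1 := by positivity
    rw [le_div_iff₀ hn1]
    have hb1 := hM _ (hubS n)
    have hb2 := hM _ (hvbS n)
    have := hkey n
    have hnn := norm_sub_le (ub n) (vb n)
    nlinarith [norm_nonneg (w n)]
  have hw0 : Filter.Tendsto w Filter.atTop (nhds 0) := by
    rw [tendsto_zero_iff_norm_tendsto_zero]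
    refine squeeze_zero (fun n => norm_nonneg _) hwle ?_
    exact Filter.Tendsto.div_atTop tendsto_const_nhds
      (Filter.tendsto_atTop_add_const_right _ 1 tendsto_natCast_atTop_atTop)
  have hK : IsCompact (closure {x ∈ X | g x ≤ 1}) :=
    TotallyBounded.isCompact_of_isClosed hcpt.closure isClosed_closure
  obtain ⟨a, _, φ, hφ, hua⟩ := hK.tendsto_subseq (fun n => subset_closure (hubS n))
  obtain ⟨b, _, ψ, hψ, hvbt⟩ := hK.tendsto_subseq (fun n => subset_closure (hvbS (φ n)))
  have hσ : Filter.Tendsto (fun n => φ (ψ n)) Filter.atTop Filter.atTop :=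
    (hφ.comp hψ).tendsto_atTop
  have hs : Filter.Tendsto (fun n => ub (φ (ψ n)) - vb (φ (ψ n))) Filter.atTop (nhds (a - b)) := by
    exact Filter.Tendsto.sub (hua.comp hψ.tendsto_atTop) hvbt
  have hw0' : Filter.Tendsto (fun n => w (φ (ψ n))) Filter.atTop (nhds 0) := hw0.comp hσ
  have hrel : ∀ n, iB (ub (φ (ψ n)) - vb (φ (ψ n))) = iY (w (φ (ψ n))) := by
    intro n
    simp only [hub, hvb, hw, map_sub, map_smul, hyu, hyv, smul_sub]
  have hab : a - b = 0 := hseq _ _ _ hrel hw0' hs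
  have hge : η ≤ ‖a - b‖ := by
    refine ge_of_tendsto' hs.norm (fun n => ?_)
    have := hkey (φ (ψ n))
    nlinarith [norm_nonneg (w (φ (ψ n))), (Nat.cast_nonneg (φ (ψ n)) : (0:ℝ) ≤ _)]
  rw [hab, norm_zero] at hge
  linarith
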